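/- Let m be a positive integer and p, q integers with 0 ≤ p, q ≤ m and p + q = m. Then the sum over k from 0 to m of C(m,k) · (Σ_{i=0}^{q} C(m-k,i)·C(k,q-i)·(-1)^i)^2 equals 2^m · C(m,q), which also equals 2^m · C(m,p). -/
import Mathlib
open Polynomial Finset

lemma coeff_one_sub_X_pow (n k : ℕ) :
    ((1 - X : Polynomial ℤ) ^ n).coeff k = (-1) ^ k * n.choose k := by
  have h : (1 - X : Polynomial ℤ) = C (-1) * (X + C (-1)) := by
    simp [C_neg]; ring
  rw [h, mul_pow, ← C_pow, coeff_C_mul, coeff_X_add_C_pow]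
  rcases le_or_gt k n with hk | hk
  · have : (-1:ℤ)^n = (-1)^(n-k) * (-1)^k := by
      rw [← pow_add]; congr 1; omega
    rw [this]; ring_nf; simp [mul_pow, ← pow_mul, mul_comm 2]
  · simp [Nat.choose_eq_zero_of_lt hk]

lemma pcoeff (a b q : ℕ) :
    (((1 - X) ^ a * (1 + X) ^ b : Polynomial ℤ)).coeff q
      = ∑ i ∈ range (q + 1), (-1:ℤ) ^ i * (a.choose i) * (b.choose (q - i)) := by
  rw [coeff_mul, Finset.Nat.sum_antidiagonal_eq_sum_range_succ_mk]
  refine Finset.sum_congr rfl fun i hi => ?_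
  rw [coeff_one_sub_X_pow, coeff_one_add_X_pow, mul_assoc]

lemma main_poly (m q : ℕ) (hq : q ≤ m) :
    ∑ k ∈ range (m+1), (m.choose k : ℤ) * ((((1-X)^(m-k)*(1+X)^k : Polynomial ℤ)).coeff q)^2
      = 2^m * m.choose q := by
  have key : ∑ k ∈ range (m+1),
      (((1+X)*(1+C X))^k * ((1-X)*(1-C X))^(m-k) * (m.choose k : Polynomial (Polynomial ℤ)))
      = 2^m * (1 + X * C X)^m := by
    rw [← add_pow]
    have h : ((1+X)*(1+C X) + (1-X)*(1-C X) : Polynomial (Polynomial ℤ)) = 2 * (1 + X * C X) := by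
      ring
    rw [h, mul_pow]
  have h2 := congrArg (fun P : Polynomial (Polynomial ℤ) => (P.coeff q).coeff q) key
  simp only [finset_sum_coeff] at h2
  have hL : ∀ k ∈ range (m+1),
      (((((1+X)*(1+C X))^k * ((1-X)*(1-C X))^(m-k) * (m.choose k : Polynomial (Polynomial ℤ))).coeff q).coeff q)
      = (m.choose k : ℤ) * ((((1-X)^(m-k)*(1+X)^k : Polynomial ℤ)).coeff q)^2 := by
    intro k _
    have hterm : (((1+X)*(1+C X))^k * ((1-X)*(1-C X))^(m-k) * (m.choose k : Polynomial (Polynomial ℤ)))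
        = (Polynomial.map C ((1-X)^(m-k)*(1+X)^k : Polynomial ℤ)) *
          C (((1-X)^(m-k)*(1+X)^k : Polynomial ℤ) * (m.choose k : Polynomial ℤ)) := by
      simp only [Polynomial.map_mul, Polynomial.map_pow, Polynomial.map_sub, Polynomial.map_add,
        Polynomial.map_one, Polynomial.map_X, map_mul, map_pow, map_sub, map_add, map_one,
        map_natCast, mul_pow]
      ring
    rw [hterm, coeff_mul_C, coeff_map, ← C_eq_natCast, coeff_C_mul, coeff_mul_C]
    ring
  rw [Finset.sum_congr rfl hL] at h2
  rw [h2]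
  have hR : (2:Polynomial (Polynomial ℤ))^m * (1 + X * C X)^m = ∑ j ∈ range (m+1),
      Polynomial.C (C ((2:ℤ)^m * (m.choose j : ℤ)) * X^j) * X^j := by
    rw [add_comm (1 : Polynomial (Polynomial ℤ)), add_pow, Finset.mul_sum]
    refine Finset.sum_congr rfl fun j _ => ?_
    simp only [one_pow, mul_one, mul_pow, map_mul, map_pow, map_natCast, map_ofNat]
    ring
  rw [hR, finset_sum_coeff]
  have hsum : ∀ j ∈ range (m+1),
      ((Polynomial.C (C ((2:ℤ)^m * (m.choose j : ℤ)) * X^j) * X^j).coeff q)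
      = if j = q then C ((2:ℤ)^m * (m.choose q : ℤ)) * X^q else 0 := by
    intro j _
    rw [coeff_C_mul, coeff_X_pow]
    by_cases h : j = q
    · subst h; simp
    · simp [h, Ne.symm h]
  rw [Finset.sum_congr rfl hsum, Finset.sum_ite_eq' (range (m+1)) q,
    if_pos (Finset.mem_range.mpr (Nat.lt_succ_of_le hq)), coeff_C_mul, coeff_X_pow,
    if_pos rfl, mul_one]

open Finset in
theorem stmt_1 (m : ℕ) (hm : 0 < m) (p q : ℕ) (hp : p ≤ m) (hq : q ≤ m)
    (hpq : p + q = m) :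
    ∑ k ∈ range (m + 1), (m.choose k : ℤ) *
      (∑ i ∈ range (q + 1), ((-1 : ℤ)) ^ i * ((m - k).choose i) * (k.choose (q - i))) ^ 2
      = 2 ^ m * (m.choose q) ∧
    (2 ^ m * (m.choose q) : ℤ) = 2 ^ m * (m.choose p) := by
  constructor
  · have := main_poly m q hq
    simp only [pcoeff] at this
    exact this
  · have hpq' : p = m - q := by omega
    subst hpq'
    rw [Nat.choose_symm hq]
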